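/- arXiv:math/0404455 — 2 statements merged into one kernel-verified Lean document; each statement's English description precedes it below -/
import Mathlib

section
/- For every real ε with −4 < ε < 0, the interval integral ∫_{−4}^{ε} φ⁻³·(−1/2 − φ/4 + φ³/64 + φ⁴/512) dφ equals 1/(4ε²) + 1/(4ε) + 3/32 + ε/64 + ε²/1024. Consequently 2π² times this integral equals π²/(2ε²) + π²/(2ε) + 3π²/16 + π²ε/32 + π²ε²/512, and in particular the expansion contains no log(−ε) term. -/
open Real

theorem bergman_hasDerivAt (x : ℝ) (hx : x ≠ 0) :
    HasDerivAt (fun t : ℝ => 1 / (4 * t ^ 2) + 1 / (4 * t) + t / 64 + t ^ 2 / 1024)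
      (x ^ (-3 : ℤ) * (-1 / 2 - x / 4 + x ^ 3 / 64 + x ^ 4 / 512)) x := by
  have h1 : HasDerivAt (fun t : ℝ => t ^ (-2 : ℤ)) ((-2 : ℤ) * x ^ (-3 : ℤ)) x := by
    simpa using hasDerivAt_zpow (-2) x (Or.inl hx)
  have h2 : HasDerivAt (fun t : ℝ => t ^ (-1 : ℤ)) ((-1 : ℤ) * x ^ (-2 : ℤ)) x := by
    simpa using hasDerivAt_zpow (-1) x (Or.inl hx)
  have h3 : HasDerivAt (fun t : ℝ => t) 1 x := hasDerivAt_id x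
  have h4 : HasDerivAt (fun t : ℝ => t ^ 2) (2 * x) x := by
    simpa using hasDerivAt_pow 2 x
  have := (((h1.div_const 4).add (h2.div_const 4)).add (h3.div_const 64)).add
      (h4.div_const 1024)
  have heq : (fun t : ℝ => t ^ (-2 : ℤ) / 4 + t ^ (-1 : ℤ) / 4 + t / 64 + t ^ 2 / 1024)
      = (fun t : ℝ => 1 / (4 * t ^ 2) + 1 / (4 * t) + t / 64 + t ^ 2 / 1024) := by
    funext t
    simp [zpow_neg, zpow_ofNat]
    ring
  replace this : HasDerivAt (fun t : ℝ => t ^ (-2 : ℤ) / 4 + t ^ (-1 : ℤ) / 4 + t / 64 + t ^ 2 / 1024) _ x := this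
  rw [heq] at this
  convert this using 1
  field_simp [zpow_neg, zpow_ofNat]
  ring

/-- The volume expansion for the Bergman metric on the unit ball in `ℂ²`:
for `−4 < ε < 0`,
`∫_{−4}^{ε} φ⁻³(−1/2 − φ/4 + φ³/64 + φ⁴/512) dφ
  = 1/(4ε²) + 1/(4ε) + 3/32 + ε/64 + ε²/1024`,
and hence `2π²` times this integral equals
`π²/(2ε²) + π²/(2ε) + 3π²/16 + π²ε/32 + π²ε²/512`; in particular the
expansion contains no `log(−ε)` term. -/
theorem bergman_volume_expansion (ε : ℝ) (hε0 : -4 < ε) (hε1 : ε < 0) :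
    (∫ φ in (-4 : ℝ)..ε,
        φ ^ (-3 : ℤ) * (-1 / 2 - φ / 4 + φ ^ 3 / 64 + φ ^ 4 / 512))
      = 1 / (4 * ε ^ 2) + 1 / (4 * ε) + 3 / 32 + ε / 64 + ε ^ 2 / 1024 ∧
    2 * π ^ 2 * (∫ φ in (-4 : ℝ)..ε,
        φ ^ (-3 : ℤ) * (-1 / 2 - φ / 4 + φ ^ 3 / 64 + φ ^ 4 / 512))
      = π ^ 2 / (2 * ε ^ 2) + π ^ 2 / (2 * ε) + 3 * π ^ 2 / 16
        + π ^ 2 * ε / 32 + π ^ 2 * ε ^ 2 / 512 := by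
  have hle : (-4 : ℝ) ≤ ε := le_of_lt hε0
  have hmem : ∀ x ∈ Set.uIcc (-4 : ℝ) ε, x ≠ 0 := by
    intro x hx
    rw [Set.uIcc_of_le hle] at hx
    exact ne_of_lt (lt_of_le_of_lt hx.2 hε1)
  have hint : (∫ φ in (-4 : ℝ)..ε,
        φ ^ (-3 : ℤ) * (-1 / 2 - φ / 4 + φ ^ 3 / 64 + φ ^ 4 / 512))
      = 1 / (4 * ε ^ 2) + 1 / (4 * ε) + 3 / 32 + ε / 64 + ε ^ 2 / 1024 := by
    have key := intervalIntegral.integral_eq_sub_of_hasDerivAt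
      (f := fun t : ℝ => 1 / (4 * t ^ 2) + 1 / (4 * t) + t / 64 + t ^ 2 / 1024)
      (f' := fun t : ℝ => t ^ (-3 : ℤ) * (-1 / 2 - t / 4 + t ^ 3 / 64 + t ^ 4 / 512))
      (a := (-4 : ℝ)) (b := ε)
      (fun x hx => bergman_hasDerivAt x (hmem x hx))
      (by
        apply ContinuousOn.intervalIntegrable
        apply ContinuousOn.mul
        · exact fun x hx => ((continuousOn_id.zpow₀ (-3) fun x hx => Or.inl (hmem x hx)) x hx)
        · fun_prop)
    rw [key]
    have hε : ε ≠ 0 := ne_of_lt hε1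
    field_simp
    ring
  refine ⟨hint, ?_⟩
  rw [hint]
  have hε : ε ≠ 0 := ne_of_lt hε1
  field_simp
  ring
end

section
/- The limit, as ε tends to 0 from below, of 2π²·∫_{−4}^{ε} φ⁻³·(−1/2 − φ/4 + φ³/64 + φ⁴/512) dφ − π²/(2ε²) − π²/(2ε) exists and equals 3π²/16. -/
open Real Filter

private lemma integral_eval (ε : ℝ) (hε : ε ∈ Set.Ioo (-1 : ℝ) 0) :
    (∫ φ in (-4 : ℝ)..ε, φ ^ (-3 : ℤ) * (-1 / 2 - φ / 4 + φ ^ 3 / 64 + φ ^ 4 / 512))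
      = (ε ^ (-2 : ℤ) / 4 + ε ^ (-1 : ℤ) / 4 + ε / 64 + ε ^ 2 / 1024) + 3 / 32 := by
  have hle : (-4 : ℝ) ≤ ε := by linarith [hε.1]
  have hsub : ∀ x ∈ Set.uIcc (-4 : ℝ) ε, x ≠ 0 := by
    intro x hx
    rw [Set.uIcc_of_le hle] at hx
    exact ne_of_lt (lt_of_le_of_lt hx.2 hε.2)
  have key := intervalIntegral.integral_eq_sub_of_hasDerivAt
    (f := fun x : ℝ => x ^ (-2 : ℤ) / 4 + x ^ (-1 : ℤ) / 4 + x / 64 + x ^ 2 / 1024)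
    (f' := fun x : ℝ => x ^ (-3 : ℤ) * (-1 / 2 - x / 4 + x ^ 3 / 64 + x ^ 4 / 512))
    (a := (-4 : ℝ)) (b := ε)
    (by
      intro x hx
      have hx0 : x ≠ 0 := hsub x hx
      have h1 : HasDerivAt (fun x : ℝ => x ^ (-2 : ℤ)) ((-2 : ℤ) * x ^ (-3 : ℤ)) x := by
        simpa using hasDerivAt_zpow (-2) x (Or.inl hx0)
      have h2 : HasDerivAt (fun x : ℝ => x ^ (-1 : ℤ)) ((-1 : ℤ) * x ^ (-2 : ℤ)) x := by
        simpa using hasDerivAt_zpow (-1) x (Or.inl hx0)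
      have h3 : HasDerivAt (fun x : ℝ => x) 1 x := hasDerivAt_id x
      have h4 : HasDerivAt (fun x : ℝ => x ^ 2) (2 * x) x := by
        simpa using hasDerivAt_pow 2 x
      have := (((h1.div_const 4).add (h2.div_const 4)).add (h3.div_const 64)).add
        (h4.div_const 1024)
      convert this using 1
      · rfl
      simp only [zpow_neg, zpow_ofNat, zpow_one, Int.cast_neg, Int.cast_ofNat, Int.cast_one]
      field_simp
      ring)
    (by
      apply ContinuousOn.intervalIntegrable
      apply ContinuousOn.mul
      · exact continuousOn_id.zpow₀ (-3) fun x hx => Or.inl (hsub x hx)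
      · fun_prop)
  rw [key]
  norm_num

/-- The renormalized volume of the Bergman metric on the unit ball in `ℂ²`:
as `ε → 0⁻`, the quantity
`2π² ∫_{−4}^{ε} φ⁻³(−1/2 − φ/4 + φ³/64 + φ⁴/512) dφ − π²/(2ε²) − π²/(2ε)`
tends to `3π²/16`. -/
theorem bergman_renormalized_volume :
    Tendsto (fun ε : ℝ =>
        2 * π ^ 2 * (∫ φ in (-4 : ℝ)..ε,
          φ ^ (-3 : ℤ) * (-1 / 2 - φ / 4 + φ ^ 3 / 64 + φ ^ 4 / 512))
          - π ^ 2 / (2 * ε ^ 2) - π ^ 2 / (2 * ε))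
      (nhdsWithin 0 (Set.Iio 0)) (nhds (3 * π ^ 2 / 16)) := by
  have hmem : Set.Ioo (-1 : ℝ) 0 ∈ nhdsWithin (0 : ℝ) (Set.Iio 0) := by
    apply mem_nhdsWithin.2
    exact ⟨Set.Ioi (-1), isOpen_Ioi, by norm_num, by
      intro x hx
      exact ⟨hx.1, hx.2⟩⟩
  have heq : ∀ ε ∈ Set.Ioo (-1 : ℝ) 0,
      2 * π ^ 2 * (∫ φ in (-4 : ℝ)..ε,
          φ ^ (-3 : ℤ) * (-1 / 2 - φ / 4 + φ ^ 3 / 64 + φ ^ 4 / 512))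
          - π ^ 2 / (2 * ε ^ 2) - π ^ 2 / (2 * ε)
        = π ^ 2 * ε / 32 + π ^ 2 * ε ^ 2 / 512 + 3 * π ^ 2 / 16 := by
    intro ε hε
    rw [integral_eval ε hε]
    have hε0 : ε ≠ 0 := ne_of_lt hε.2
    simp only [zpow_neg, zpow_ofNat, zpow_one]
    field_simp
    ring
  have hlim : Tendsto (fun ε : ℝ => π ^ 2 * ε / 32 + π ^ 2 * ε ^ 2 / 512 + 3 * π ^ 2 / 16)
      (nhdsWithin 0 (Set.Iio 0)) (nhds (3 * π ^ 2 / 16)) := by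
    have : Continuous (fun ε : ℝ => π ^ 2 * ε / 32 + π ^ 2 * ε ^ 2 / 512 + 3 * π ^ 2 / 16) := by
      fun_prop
    have h := (this.tendsto 0).mono_left (nhdsWithin_le_nhds (s := Set.Iio 0))
    simpa using h
  refine hlim.congr' ?_
  filter_upwards [hmem] with ε hε
  exact (heq ε hε).symm
end
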